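/- Let B be a unital associative ℂ-algebra, ε : B → ℂ a unital ℂ-algebra homomorphism, and φ : B → ℂ a ℂ-linear functional satisfying the Gaussian product identity. Then for every n ≥ 2 and all a₁, …, aₙ ∈ B one has φ(a₁⋯aₙ) = Σ_{1≤j<k≤n} φ(aⱼaₖ)·Π_{i≠j,k} ε(aᵢ) − (n−2)·Σ_{1≤j≤n} φ(aⱼ)·Π_{i≠j} ε(aᵢ). -/

import Mathlib

open Finset

section WickAux

variable {B : Type*} [Ring B] [Algebra ℂ B] (ε : B →ₐ[ℂ] ℂ) (φ : B →ₗ[ℂ] ℂ)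

/-- First-order list sum: `Σ_j φ(a_j) Π_{i≠j} ε(a_i)`. -/
noncomputable def wickS1 : List B → ℂ
  | [] => 0
  | x :: t => φ x * ε t.prod + ε x * wickS1 t

/-- `Σ_k φ(x * a_k) Π_{i≠k} ε(a_i)`. -/
noncomputable def wickT (x : B) : List B → ℂ
  | [] => 0
  | y :: t => φ (x * y) * ε t.prod + ε y * wickT x t

/-- Second-order list sum: `Σ_{j<k} φ(a_j a_k) Π_{i≠j,k} ε(a_i)`. -/
noncomputable def wickS2 : List B → ℂ
  | [] => 0
  | x :: t => wickT ε φ x t + ε x * wickS2 t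

theorem wick_main
    (hG : ∀ a b c : B, φ (a * b * c) =
      φ (a * b) * ε c + φ (a * c) * ε b + φ (b * c) * ε a
      - φ a * ε (b * c) - φ b * ε (a * c) - φ c * ε (a * b))
    (l : List B) :
    φ l.prod = wickS2 ε φ l - ((l.length : ℂ) - 2) * wickS1 ε φ l := by
  have hone : φ 1 = 0 := by
    have h := hG 1 1 1
    simp only [one_mul, mul_one, map_one] at h
    linear_combination h
  match l with
  | [] => simp [wickS1, wickS2, hone]
  | [x] => simp [wickS1, wickS2, wickT]; ring
  | x :: y :: t =>
    have ih1 := wick_main hG (x :: t)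
    have ih2 := wick_main hG (y :: t)
    have ih3 := wick_main hG t
    simp only [List.prod_cons, List.length_cons, wickS1, wickS2, wickT, map_mul] at ih1 ih2 ih3 ⊢
    rw [← mul_assoc, hG x y t.prod, ih1, ih2, ih3]
    simp only [map_mul]
    push_cast
    ring
termination_by l.length

end WickAux

section EraseLemmas

private def finSuccEmb (n : ℕ) : Fin n ↪ Fin (n + 1) := ⟨Fin.succ, Fin.succ_injective n⟩

lemma map_emb_erase {n : ℕ} (s : Finset (Fin n)) (k : Fin n) :
    (s.map (finSuccEmb n)).erase k.succ = (s.erase k).map (finSuccEmb n) := by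
  rw [Finset.map_erase]; rfl

lemma zero_not_mem_map_emb {n : ℕ} (s : Finset (Fin n)) :
    (0 : Fin (n + 1)) ∉ s.map (finSuccEmb n) := by
  simp [finSuccEmb, (Fin.succ_ne_zero _)]

lemma erase_zero_eq (n : ℕ) :
    (univ : Finset (Fin (n + 1))).erase 0 = univ.map (finSuccEmb n) := by
  rw [Fin.univ_succ, Finset.erase_cons]
  rfl

lemma erase_succ_eq (n : ℕ) (j : Fin n) :
    (univ : Finset (Fin (n + 1))).erase j.succ =
      insert 0 ((univ.erase j).map (finSuccEmb n)) := by
  rw [Fin.univ_succ, Finset.cons_eq_insert,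
    Finset.erase_insert_of_ne (Fin.succ_ne_zero j).symm]
  rw [show ((univ.map ⟨Fin.succ, Fin.succ_injective n⟩ : Finset (Fin (n+1)))) =
      univ.map (finSuccEmb n) from rfl, map_emb_erase]

lemma prod_erase_zero {n : ℕ} (g : Fin (n + 1) → ℂ) :
    ∏ i ∈ (univ : Finset (Fin (n + 1))).erase 0, g i = ∏ i : Fin n, g i.succ := by
  rw [erase_zero_eq, Finset.prod_map]; rfl

lemma prod_erase_succ {n : ℕ} (g : Fin (n + 1) → ℂ) (j : Fin n) :
    ∏ i ∈ (univ : Finset (Fin (n + 1))).erase j.succ, g i =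
      g 0 * ∏ i ∈ univ.erase j, g i.succ := by
  rw [erase_succ_eq, Finset.prod_insert (zero_not_mem_map_emb _), Finset.prod_map]; rfl

lemma prod_erase_zero_succ {n : ℕ} (g : Fin (n + 1) → ℂ) (k : Fin n) :
    ∏ i ∈ ((univ : Finset (Fin (n + 1))).erase 0).erase k.succ, g i =
      ∏ i ∈ univ.erase k, g i.succ := by
  rw [erase_zero_eq, map_emb_erase, Finset.prod_map]; rfl

lemma prod_erase_succ_succ {n : ℕ} (g : Fin (n + 1) → ℂ) (j k : Fin n) :
    ∏ i ∈ (((univ : Finset (Fin (n + 1))).erase j.succ).erase k.succ), g i =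
      g 0 * ∏ i ∈ (univ.erase j).erase k, g i.succ := by
  rw [erase_succ_eq, Finset.erase_insert_of_ne (Fin.succ_ne_zero k).symm, map_emb_erase,
    Finset.prod_insert (zero_not_mem_map_emb _), Finset.prod_map]
  rfl

end EraseLemmas

section Convert

variable {B : Type*} [Ring B] [Algebra ℂ B] (ε : B →ₐ[ℂ] ℂ) (φ : B →ₗ[ℂ] ℂ)

lemma eps_prod_ofFn {n : ℕ} (a : Fin n → B) :
    ε (List.ofFn a).prod = ∏ i, ε (a i) := by
  rw [map_list_prod, List.map_ofFn, List.prod_ofFn]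
  rfl

lemma wickS1_ofFn : ∀ (n : ℕ) (a : Fin n → B),
    wickS1 ε φ (List.ofFn a) = ∑ j, φ (a j) * ∏ i ∈ univ.erase j, ε (a i) := by
  intro n
  induction n with
  | zero => intro a; simp [wickS1]
  | succ n ih =>
    intro a
    rw [List.ofFn_succ]
    show wickS1 ε φ (a 0 :: List.ofFn fun i => a i.succ) = _
    rw [wickS1, eps_prod_ofFn, ih, Fin.sum_univ_succ, prod_erase_zero (fun i => ε (a i)),
      Finset.mul_sum]
    congr 1
    refine Finset.sum_congr rfl fun j _ => ?_
    rw [prod_erase_succ (fun i => ε (a i))]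
    ring

lemma wickT_ofFn (x : B) : ∀ (n : ℕ) (a : Fin n → B),
    wickT ε φ x (List.ofFn a) = ∑ k, φ (x * a k) * ∏ i ∈ univ.erase k, ε (a i) := by
  intro n
  induction n with
  | zero => intro a; simp [wickT]
  | succ n ih =>
    intro a
    rw [List.ofFn_succ]
    show wickT ε φ x (a 0 :: List.ofFn fun i => a i.succ) = _
    rw [wickT, eps_prod_ofFn, ih, Fin.sum_univ_succ, prod_erase_zero (fun i => ε (a i)),
      Finset.mul_sum]
    congr 1
    refine Finset.sum_congr rfl fun k _ => ?_
    rw [prod_erase_succ (fun i => ε (a i))]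
    ring

lemma wickS2_ofFn : ∀ (n : ℕ) (a : Fin n → B),
    wickS2 ε φ (List.ofFn a) = ∑ j, ∑ k, if j < k then
      φ (a j * a k) * ∏ i ∈ (univ.erase j).erase k, ε (a i) else 0 := by
  intro n
  induction n with
  | zero => intro a; simp [wickS2]
  | succ n ih =>
    intro a
    rw [List.ofFn_succ]
    show wickS2 ε φ (a 0 :: List.ofFn fun i => a i.succ) = _
    rw [wickS2, wickT_ofFn, ih, Fin.sum_univ_succ]
    congr 1
    · -- j = 0 outer term
      rw [Fin.sum_univ_succ]
      simp only [lt_self_iff_false, if_false, zero_add, Fin.succ_pos, if_true]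
      refine Finset.sum_congr rfl fun k _ => ?_
      rw [prod_erase_zero_succ (fun i => ε (a i))]
    · -- j = succ
      rw [Finset.mul_sum]
      refine Finset.sum_congr rfl fun j _ => ?_
      rw [Fin.sum_univ_succ, Finset.mul_sum]
      simp only [Fin.not_lt_zero, if_false, zero_add, Fin.succ_lt_succ_iff]
      refine Finset.sum_congr rfl fun k _ => ?_
      rw [prod_erase_succ_succ (fun i => ε (a i)), mul_ite, mul_zero]
      split_ifs with h
      · ring
      · rfl

end Convert

/-- Wick-type formula for Gaussian generating functionals
(Proposition `prop:wick` of the paper). -/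
theorem gaussian_wick_formula
    {B : Type*} [Ring B] [Algebra ℂ B]
    (ε : B →ₐ[ℂ] ℂ) (φ : B →ₗ[ℂ] ℂ)
    (hG : ∀ a b c : B, φ (a * b * c) =
      φ (a * b) * ε c + φ (a * c) * ε b + φ (b * c) * ε a
      - φ a * ε (b * c) - φ b * ε (a * c) - φ c * ε (a * b))
    (n : ℕ) (hn : 2 ≤ n) (a : Fin n → B) :
    φ (List.ofFn a).prod =
      (∑ j : Fin n, ∑ k : Fin n, if j < k then
          φ (a j * a k) * ∏ i ∈ (Finset.univ.erase j).erase k, ε (a i) else 0)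
      - ((n : ℂ) - 2) *
          ∑ j : Fin n, φ (a j) * ∏ i ∈ Finset.univ.erase j, ε (a i) := by
  rw [wick_main ε φ hG, wickS1_ofFn, wickS2_ofFn, List.length_ofFn]
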